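/- Let G₁ and G₂ be Polish groups, let A₁ ⊆ G₁ be a Borel set, and let U ⊆ G₂ be a nonempty open set. Then A₁ × U is Haar null in the product group G₁ × G₂ if and only if A₁ is Haar null in G₁. -/

import Mathlib

open MeasureTheory

/-- A set `A` in a topological group is *Haar null* if there are a Borel set `B ⊇ A` and a
Borel probability measure `μ` such that `μ (g • B • h) = 0` for all `g, h`. -/
def HaarNull {G : Type*} [Group G] [MeasurableSpace G] (A : Set G) : Prop :=
  ∃ B : Set G, A ⊆ B ∧ MeasurableSet B ∧
    ∃ μ : Measure G, IsProbabilityMeasure μ ∧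
      ∀ g h : G, μ ((fun b => g * b * h) '' B) = 0

lemma image_mul_eq_preimage {G : Type*} [Group G] (g h : G) (B : Set G) :
    (fun b => g * b * h) '' B = (fun x => g⁻¹ * x * h⁻¹) ⁻¹' B := by
  ext x
  constructor
  · rintro ⟨b, hb, rfl⟩
    simpa [mul_assoc] using hb
  · intro hx
    exact ⟨g⁻¹ * x * h⁻¹, hx, by group⟩

lemma measurableSet_image_mul {G : Type*} [Group G] [TopologicalSpace G] [IsTopologicalGroup G]
    [MeasurableSpace G] [BorelSpace G] (g h : G) {B : Set G} (hB : MeasurableSet B) :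
    MeasurableSet ((fun b => g * b * h) '' B) := by
  rw [image_mul_eq_preimage]
  exact hB.preimage (by fun_prop)

/-- If `G₁, G₂` are Polish groups, `A₁ ⊆ G₁` is Borel and `U ⊆ G₂` is nonempty open, then
`A₁ × U` is Haar null in `G₁ × G₂` iff `A₁` is Haar null in `G₁`. -/
theorem stmt_19 {G₁ G₂ : Type*}
    [Group G₁] [TopologicalSpace G₁] [IsTopologicalGroup G₁] [PolishSpace G₁]
    [MeasurableSpace G₁] [BorelSpace G₁]
    [Group G₂] [TopologicalSpace G₂] [IsTopologicalGroup G₂] [PolishSpace G₂]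
    [MeasurableSpace G₂] [BorelSpace G₂]
    (A₁ : Set G₁) (hA₁ : MeasurableSet A₁) (U : Set G₂) (hU : IsOpen U)
    (hUne : U.Nonempty) :
    HaarNull (A₁ ×ˢ U) ↔ HaarNull A₁ := by
  constructor
  · rintro ⟨B, hAB, hBm, μ, hμ, hnull⟩
    refine ⟨A₁, subset_refl _, hA₁, Measure.map Prod.fst μ,
      Measure.isProbabilityMeasure_map measurable_fst.aemeasurable, ?_⟩
    intro g h
    have hTm : MeasurableSet ((fun b => g * b * h) '' A₁) :=
      measurableSet_image_mul g h hA₁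
    rw [Measure.map_apply measurable_fst hTm]
    obtain ⟨D, hDc, hDd⟩ := TopologicalSpace.exists_countable_dense G₂
    -- covering of univ by left translates of U
    have hcover : Prod.fst ⁻¹' ((fun b => g * b * h) '' A₁) ⊆
        ⋃ d ∈ D, (fun b : G₁ × G₂ => (g, d) * b * (h, 1)) '' B := by
      rintro ⟨x, y⟩ hxy
      obtain ⟨a, ha, hax⟩ := hxy
      -- find d ∈ D with y ∈ d • U, i.e. d⁻¹ * y ∈ U, i.e. d ∈ y • U⁻¹ image
      obtain ⟨u, hu⟩ := hUne
      have hopen : IsOpen ((fun z => y * z⁻¹) '' U) := by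
        have : (fun z : G₂ => y * z⁻¹) '' U = (fun w : G₂ => (y⁻¹ * w)⁻¹) ⁻¹' U := by
          ext w
          constructor
          · rintro ⟨z, hz, rfl⟩; simpa [mul_assoc] using hz
          · intro hw; exact ⟨(y⁻¹ * w)⁻¹, hw, by group⟩
        rw [this]
        exact hU.preimage (by fun_prop)
      have hne : ((fun z => y * z⁻¹) '' U).Nonempty := ⟨y * u⁻¹, u, hu, rfl⟩
      obtain ⟨d, hdD, hdU⟩ := hDd.exists_mem_open hopen hne
      obtain ⟨v, hv, hdv⟩ := hdU
      refine Set.mem_iUnion₂.2 ⟨d, hdD, ⟨(a, v), hAB ⟨ha, hv⟩, ?_⟩⟩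
      have : d * v = y := by rw [← hdv]; group
      simp [Prod.ext_iff, hax, this]
    refine measure_mono_null hcover ?_
    refine measure_biUnion_null_iff hDc |>.2 ?_
    intro d _
    exact hnull (g, d) (h, 1)
  · rintro ⟨B, hAB, hBm, μ, hμ, hnull⟩
    haveI := hμ
    refine ⟨B ×ˢ Set.univ, Set.prod_mono hAB (Set.subset_univ U),
      hBm.prod MeasurableSet.univ, μ.prod (Measure.dirac 1), inferInstance, ?_⟩
    rintro ⟨g₁, g₂⟩ ⟨h₁, h₂⟩
    have himg : (fun b : G₁ × G₂ => (g₁, g₂) * b * (h₁, h₂)) '' (B ×ˢ Set.univ) =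
        ((fun b => g₁ * b * h₁) '' B) ×ˢ ((fun b => g₂ * b * h₂) '' Set.univ) := by
      ext ⟨x, y⟩
      constructor
      · rintro ⟨⟨b₁, b₂⟩, ⟨hb₁, -⟩, h⟩
        obtain ⟨hx, hy⟩ := Prod.ext_iff.1 h
        exact ⟨⟨b₁, hb₁, hx⟩, ⟨b₂, Set.mem_univ _, hy⟩⟩
      · rintro ⟨⟨b₁, hb₁, hx⟩, ⟨b₂, -, hy⟩⟩
        exact ⟨(b₁, b₂), ⟨hb₁, Set.mem_univ _⟩, Prod.ext hx hy⟩
    rw [himg, Measure.prod_prod, hnull g₁ h₁, zero_mul]
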